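/- If P(X₁,...,Xₙ) weakly sign represents parity over {0,...,m−1}ⁿ and deg_i(P) ≤ m−1 for each variable, then P has sparsity at least (m−1)ⁿ. -/

import Mathlib

open MvPolynomial

/-- `P` weakly sign represents the parity function over `A^n`. -/
def WeakSignRepParity (n : ℕ) (A : Finset ℕ) (P : MvPolynomial (Fin n) ℝ) : Prop :=
  (∀ a : Fin n → ℕ, (∀ i, a i ∈ A) →
    (Even (∑ i, a i) → 0 ≤ MvPolynomial.eval (fun i => (a i : ℝ)) P) ∧
    (Odd (∑ i, a i) → MvPolynomial.eval (fun i => (a i : ℝ)) P ≤ 0)) ∧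
  (∃ a : Fin n → ℕ, (∀ i, a i ∈ A) ∧ MvPolynomial.eval (fun i => (a i : ℝ)) P ≠ 0)

/-- The dual weight: coefficient of `X^w` in the Lagrange basis polynomial at node `b`
with nodes `0, 1, ..., m-1`. -/
noncomputable def parityMu (m w b : ℕ) : ℝ :=
  (Lagrange.basis (Finset.range m) (fun j : ℕ => (j : ℝ)) b).coeff w

lemma parityMu_castInjOn (m : ℕ) :
    Set.InjOn (fun j : ℕ => (j : ℝ)) (Finset.range m) := by
  intro a _ b _ h
  exact Nat.cast_injective h

/-- Orthogonality: the weights `parityMu m w` extract the `w`-th coefficient. -/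
lemma parityMu_moment (m w k : ℕ) (hk : k < m) :
    ∑ b ∈ Finset.range m, (b : ℝ) ^ k * parityMu m w b
      = if w = k then 1 else 0 := by
  have hinj := parityMu_castInjOn m
  have hdeg : (Polynomial.X ^ k : Polynomial ℝ).degree < (Finset.range m).card := by
    rw [Polynomial.degree_X_pow, Finset.card_range]
    exact_mod_cast hk
  have h := Lagrange.eq_interpolate hinj hdeg
  have h2 := congrArg (fun q : Polynomial ℝ => q.coeff w) h
  simp only [Lagrange.interpolate_apply, Polynomial.finset_sum_coeff,
    Polynomial.coeff_C_mul, Polynomial.coeff_X_pow, Polynomial.eval_pow,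
    Polynomial.eval_X] at h2
  unfold parityMu
  exact h2.symm

lemma neg_one_pow_inv_real (k : ℕ) : ((-1 : ℝ) ^ k)⁻¹ = (-1) ^ k := by
  rcases Nat.even_or_odd k with h | h
  · rw [h.neg_one_pow]; norm_num
  · rw [h.neg_one_pow]; norm_num

/-- Strict sign alternation of the dual weights, for `1 ≤ w ≤ m-1`. -/
lemma parityMu_sign (m w b : ℕ) (hw1 : 1 ≤ w) (hw : w ≤ m - 1) (hb : b < m) :
    ∃ c : ℝ, 0 < c ∧ parityMu m w b = (-1) ^ (b + w) * c := by
  have hm : 2 ≤ m := by omega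
  set E : Finset ℕ := (Finset.range m).erase b with hE
  have hbmem : b ∈ Finset.range m := Finset.mem_range.2 hb
  have hcardE : E.card = m - 1 := by
    rw [hE, Finset.card_erase_of_mem hbmem, Finset.card_range]
  -- decompose the basis polynomial
  have hbasis : Lagrange.basis (Finset.range m) (fun j : ℕ => (j : ℝ)) b
      = Polynomial.C (∏ j ∈ E, ((b : ℝ) - (j : ℝ))⁻¹)
        * ∏ j ∈ E, (Polynomial.X - Polynomial.C (j : ℝ)) := by
    rw [Lagrange.basis, map_prod, ← Finset.prod_mul_distrib]
    apply Finset.prod_congr rfl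
    intro j _
    rfl
  -- the numerator coefficient
  have hQcoeff : (∏ j ∈ E, (Polynomial.X - Polynomial.C (j : ℝ))).coeff w
      = (-1) ^ (m - 1 - w) * (E.powersetCard (m - 1 - w)).sum
          (fun t => ∏ j ∈ t, (j : ℝ)) := by
    have hcard : Multiset.card (E.val.map (fun j : ℕ => (j : ℝ))) = m - 1 := by
      rw [Multiset.card_map]; exact_mod_cast hcardE
    have hwle : w ≤ Multiset.card (E.val.map (fun j : ℕ => (j : ℝ))) := by
      rw [hcard]; exact hw
    have h := Multiset.prod_X_sub_C_coeff (E.val.map (fun j : ℕ => (j : ℝ))) hwle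
    rw [Finset.prod_eq_multiset_prod,
      show (fun j : ℕ => Polynomial.X - Polynomial.C (j:ℝ))
        = ((fun t : ℝ => Polynomial.X - Polynomial.C t) ∘ (fun j : ℕ => (j:ℝ))) from rfl,
      ← Multiset.map_map, h, hcard, Finset.esymm_map_val]
  -- positivity of the elementary symmetric sum
  have hesymm_pos : 0 < (E.powersetCard (m - 1 - w)).sum (fun t => ∏ j ∈ t, (j : ℝ)) := by
    apply Finset.sum_pos'
    · intro t _
      exact Finset.prod_nonneg fun j _ => Nat.cast_nonneg j
    · have hcard' : m - 1 - w ≤ (E.erase 0).card := by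
        have h1 : E.card - 1 ≤ (E.erase 0).card := Finset.pred_card_le_card_erase
        omega
      obtain ⟨t, hts, htc⟩ := Finset.exists_subset_card_eq hcard'
      refine ⟨t, Finset.mem_powersetCard.2 ⟨hts.trans (Finset.erase_subset _ _), htc⟩, ?_⟩
      apply Finset.prod_pos
      intro j hj
      have : j ≠ 0 := Finset.ne_of_mem_erase (hts hj)
      exact_mod_cast Nat.pos_of_ne_zero this
  -- the denominator product
  have hsplit : E = Finset.range b ∪ Finset.Ico (b + 1) m := by
    ext j
    simp only [hE, Finset.mem_erase, Finset.mem_range, Finset.mem_union, Finset.mem_Ico]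
    omega
  have hdisj : Disjoint (Finset.range b) (Finset.Ico (b + 1) m) := by
    rw [Finset.disjoint_left]
    intro j hj hj'
    simp only [Finset.mem_range] at hj
    simp only [Finset.mem_Ico] at hj'
    omega
  have hlow : 0 < ∏ j ∈ Finset.range b, ((b : ℝ) - (j : ℝ)) := by
    apply Finset.prod_pos
    intro j hj
    have : j < b := Finset.mem_range.1 hj
    have : (j : ℝ) < (b : ℝ) := by exact_mod_cast this
    linarith
  have hhigh_pos : 0 < ∏ j ∈ Finset.Ico (b + 1) m, ((j : ℝ) - (b : ℝ)) := by
    apply Finset.prod_pos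
    intro j hj
    have : b + 1 ≤ j := (Finset.mem_Ico.1 hj).1
    have : (b : ℝ) < (j : ℝ) := by exact_mod_cast Nat.lt_of_succ_le this
    linarith
  have hIcocard : (Finset.Ico (b + 1) m).card = m - 1 - b := by
    rw [Nat.card_Ico]; omega
  have hhigh : ∏ j ∈ Finset.Ico (b + 1) m, ((b : ℝ) - (j : ℝ))
      = (-1) ^ (m - 1 - b) * ∏ j ∈ Finset.Ico (b + 1) m, ((j : ℝ) - (b : ℝ)) := by
    rw [← hIcocard, ← Finset.prod_const (-1 : ℝ), ← Finset.prod_mul_distrib]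
    apply Finset.prod_congr rfl
    intro j _
    ring
  have hD : ∏ j ∈ E, ((b : ℝ) - (j : ℝ))
      = (-1) ^ (m - 1 - b) *
        ((∏ j ∈ Finset.range b, ((b : ℝ) - (j : ℝ)))
          * ∏ j ∈ Finset.Ico (b + 1) m, ((j : ℝ) - (b : ℝ))) := by
    rw [hsplit, Finset.prod_union hdisj, hhigh]; ring
  -- assemble
  have hmu : parityMu m w b
      = (∏ j ∈ E, ((b : ℝ) - (j : ℝ)))⁻¹
        * ((-1) ^ (m - 1 - w) * (E.powersetCard (m - 1 - w)).sum
            (fun t => ∏ j ∈ t, (j : ℝ))) := by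
    rw [parityMu, hbasis, Polynomial.coeff_C_mul, hQcoeff, ← Finset.prod_inv_distrib]
  set u : ℝ := (∏ j ∈ Finset.range b, ((b : ℝ) - (j : ℝ)))
      * ∏ j ∈ Finset.Ico (b + 1) m, ((j : ℝ) - (b : ℝ)) with hu
  have hupos : 0 < u := mul_pos hlow hhigh_pos
  set e : ℝ := (E.powersetCard (m - 1 - w)).sum (fun t => ∏ j ∈ t, (j : ℝ)) with he
  refine ⟨u⁻¹ * e, mul_pos (inv_pos.2 hupos) hesymm_pos, ?_⟩
  rw [hmu, hD, mul_inv, neg_one_pow_inv_real]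
  have hpar : (-1 : ℝ) ^ (m - 1 - b) * (-1) ^ (m - 1 - w) = (-1) ^ (b + w) := by
    rw [← pow_add]
    rw [neg_one_pow_eq_pow_mod_two, neg_one_pow_eq_pow_mod_two (n := b + w)]
    congr 1
    omega
  calc (-1:ℝ) ^ (m - 1 - b) * u⁻¹ * ((-1) ^ (m - 1 - w) * e)
      = ((-1:ℝ) ^ (m - 1 - b) * (-1) ^ (m - 1 - w)) * (u⁻¹ * e) := by ring
    _ = (-1) ^ (b + w) * (u⁻¹ * e) := by rw [hpar]

theorem weak_parity_signrep_sparsity (n m : ℕ) (hm : 2 ≤ m)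
    (P : MvPolynomial (Fin n) ℝ)
    (hdeg : ∀ i, P.degreeOf i ≤ m - 1)
    (hrep : WeakSignRepParity n (Finset.range m) P) :
    (m - 1) ^ n ≤ P.support.card := by
  by_contra hcon
  push_neg at hcon
  obtain ⟨hsgn, a₀, ha₀mem, ha₀⟩ := hrep
  -- find an exponent vector w ∈ {1,...,m-1}^n outside the support
  set T := Fintype.piFinset (fun _ : Fin n => Finset.Icc 1 (m - 1)) with hT
  have hTcard : T.card = (m - 1) ^ n := by
    rw [hT, Fintype.card_piFinset]
    simp [Nat.card_Icc]
  have hwex : ∃ w ∈ T, (Finsupp.equivFunOnFinite.symm w) ∉ P.support := by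
    by_contra hall
    push_neg at hall
    have hle : T.card ≤ P.support.card :=
      Finset.card_le_card_of_injOn (fun w => Finsupp.equivFunOnFinite.symm w) hall
        (fun x _ y _ h => Finsupp.equivFunOnFinite.symm.injective h)
    omega
  obtain ⟨w, hwT, hwns⟩ := hwex
  have hw1 : ∀ i, 1 ≤ w i := fun i =>
    (Finset.mem_Icc.1 (Fintype.mem_piFinset.1 hwT i)).1
  have hw2 : ∀ i, w i ≤ m - 1 := fun i =>
    (Finset.mem_Icc.1 (Fintype.mem_piFinset.1 hwT i)).2
  -- the weighted sum over the grid vanishes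
  have hstep1 : ∀ a : Fin n → ℕ,
      (∏ i, parityMu m (w i) (a i)) * eval (fun i => ((a i : ℝ))) P
        = ∑ d ∈ P.support, P.coeff d *
            ∏ i, ((a i : ℝ) ^ d i * parityMu m (w i) (a i)) := by
    intro a
    rw [eval_eq', Finset.mul_sum]
    apply Finset.sum_congr rfl
    intro d _
    rw [Finset.prod_mul_distrib]
    ring
  have hsum : ∑ a ∈ Fintype.piFinset (fun _ : Fin n => Finset.range m),
      (∏ i, parityMu m (w i) (a i)) * eval (fun i => ((a i : ℝ))) P = 0 := by
    rw [Finset.sum_congr rfl (fun a _ => hstep1 a), Finset.sum_comm]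
    apply Finset.sum_eq_zero
    intro d hd
    rw [← Finset.mul_sum]
    have hfac := Finset.sum_prod_piFinset (Finset.range m)
      (fun (i : Fin n) (b : ℕ) => (b : ℝ) ^ d i * parityMu m (w i) b)
    rw [hfac]
    have hdi : ∀ i, d i < m := by
      intro i
      have h1 : d i ≤ P.degreeOf i := by
        rw [MvPolynomial.degreeOf_eq_sup]
        exact Finset.le_sup (f := fun e : Fin n →₀ ℕ => e i) hd
      have := hdeg i
      omega
    have hne : ∃ i, d i ≠ w i := by
      by_contra hno
      push_neg at hno
      apply hwns
      have hdw : Finsupp.equivFunOnFinite.symm w = d := by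
        ext i
        simp [Finsupp.equivFunOnFinite, hno i]
        rfl
      rw [hdw]
      exact hd
    obtain ⟨i0, hi0⟩ := hne
    rw [Finset.prod_congr rfl (fun i _ => parityMu_moment m (w i) (d i) (hdi i))]
    exact mul_eq_zero_of_right _
      (Finset.prod_eq_zero (Finset.mem_univ i0) (if_neg (fun hh : w i0 = d i0 => hi0 hh.symm)))
  -- each term of the sum is (after sign twist) nonnegative
  have hnonneg : ∀ a ∈ Fintype.piFinset (fun _ : Fin n => Finset.range m), 0 ≤ (-1 : ℝ) ^ (∑ i, w i) *
      ((∏ i, parityMu m (w i) (a i)) * eval (fun i => ((a i : ℝ))) P) := by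
    intro a haG
    have ha : ∀ i, a i < m := fun i =>
      Finset.mem_range.1 (Fintype.mem_piFinset.1 haG i)
    choose c hcpos hc using fun i => parityMu_sign m (w i) (a i) (hw1 i) (hw2 i) (ha i)
    have hprod : ∏ i, parityMu m (w i) (a i)
        = (-1 : ℝ) ^ (∑ i, (a i + w i)) * ∏ i, c i := by
      rw [Finset.prod_congr rfl (fun i _ => hc i), Finset.prod_mul_distrib,
        Finset.prod_pow_eq_pow_sum]
    have key : (-1 : ℝ) ^ (∑ i, w i) * (-1) ^ (∑ i, (a i + w i))
        = (-1) ^ (∑ i, a i) := by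
      rw [← pow_add, neg_one_pow_eq_pow_mod_two,
        neg_one_pow_eq_pow_mod_two (n := ∑ i, a i)]
      congr 1
      have hsplit : ∑ i, (a i + w i) = (∑ i, a i) + ∑ i, w i :=
        Finset.sum_add_distrib
      omega
    have hre : (-1 : ℝ) ^ (∑ i, w i) *
        ((∏ i, parityMu m (w i) (a i)) * eval (fun i => ((a i : ℝ))) P)
        = (-1 : ℝ) ^ (∑ i, a i) *
          ((∏ i, c i) * eval (fun i => ((a i : ℝ))) P) := by
      rw [hprod, ← key]; ring
    rw [hre]
    have hcprod : 0 ≤ ∏ i, c i := Finset.prod_nonneg fun i _ => (hcpos i).le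
    rcases Nat.even_or_odd (∑ i, a i) with hpar | hpar
    · have hev := (hsgn a (fun i => Finset.mem_range.2 (ha i))).1 hpar
      rw [hpar.neg_one_pow, one_mul]
      exact mul_nonneg hcprod hev
    · have hev := (hsgn a (fun i => Finset.mem_range.2 (ha i))).2 hpar
      rw [hpar.neg_one_pow]
      have : (∏ i, c i) * eval (fun i => ((a i : ℝ))) P ≤ 0 :=
        mul_nonpos_of_nonneg_of_nonpos hcprod hev
      linarith
  have hz := (Finset.sum_eq_zero_iff_of_nonneg hnonneg).1
    (by rw [← Finset.mul_sum, hsum, mul_zero])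
  have ha₀G : a₀ ∈ Fintype.piFinset (fun _ : Fin n => Finset.range m) := Fintype.mem_piFinset.2 fun i => ha₀mem i
  have h0 := hz a₀ ha₀G
  have hsne : ((-1 : ℝ) ^ (∑ i, w i)) ≠ 0 := pow_ne_zero _ (by norm_num)
  have ha : ∀ i, a₀ i < m := fun i => Finset.mem_range.1 (ha₀mem i)
  choose c hcpos hc using fun i => parityMu_sign m (w i) (a₀ i) (hw1 i) (hw2 i) (ha i)
  have hmune : (∏ i, parityMu m (w i) (a₀ i)) ≠ 0 := by
    rw [Finset.prod_ne_zero_iff]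
    intro i _
    rw [hc i]
    exact mul_ne_zero (pow_ne_zero _ (by norm_num)) (hcpos i).ne'
  have : eval (fun i => ((a₀ i : ℝ))) P = 0 := by
    rcases mul_eq_zero.1 h0 with h | h
    · exact absurd h hsne
    · rcases mul_eq_zero.1 h with h' | h'
      · exact absurd h' hmune
      · exact h'
  exact ha₀ this
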